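/- Let A and B be Hermitian n × n matrices with A positive definite. Then the number of zero roots (i.e., the multiplicity of 0 as a root) of η(zA,−B) equals the dimension of the kernel of B. -/

import Mathlib

open Polynomial ComplexOrder

/-- The principal submatrix of `A` with rows and columns indexed by `S`. -/
def principalSub {ι : Type*} (A : Matrix ι ι ℂ) (S : Finset ι) : Matrix S S ℂ :=
  A.submatrix Subtype.val Subtype.val

/-- `η(zA, B) = Σ_S det(A[S]) det(B[S']) z^{|S|}`, as a polynomial in `z`. -/
noncomputable def etaPoly {ι : Type*} [Fintype ι] [DecidableEq ι]
    (A B : Matrix ι ι ℂ) : Polynomial ℂ :=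
  ∑ S : Finset ι,
    Polynomial.C ((principalSub A S).det * (principalSub B Sᶜ).det) * Polynomial.X ^ S.card

open Matrix

/-- A product of rectangular matrices with inner dimension smaller than the outer one has
zero determinant. -/
lemma det_mul_of_lt {T R : Type*} [Fintype T] [Fintype R] [DecidableEq T] [DecidableEq R]
    (h : Fintype.card R < Fintype.card T) (M : Matrix T R ℂ) (N : Matrix R T ℂ) :
    (M * N).det = 0 := by
  by_contra hdet
  have hu : IsUnit (M * N) := (Matrix.isUnit_iff_isUnit_det _).mpr (Ne.isUnit hdet)
  have h1 : (M * N).rank = Fintype.card T := Matrix.rank_of_isUnit _ hu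
  have h2 : (M * N).rank ≤ Fintype.card R :=
    le_trans (Matrix.rank_mul_le_left M N) (Matrix.rank_le_card_width M)
  omega

/-- A principal submatrix of a positive definite matrix is positive definite. -/
lemma principalSub_posDef {n : ℕ} {A : Matrix (Fin n) (Fin n) ℂ} (hA : A.PosDef)
    (S : Finset (Fin n)) : (principalSub A S).PosDef := by
  classical
  refine Matrix.posDef_iff_dotProduct_mulVec.mpr ⟨hA.isHermitian.submatrix _, fun x hx => ?_⟩
  set y : Fin n → ℂ := fun a => if h : a ∈ S then x ⟨a, h⟩ else 0 with hydef
  have hyx : ∀ j : {z // z ∈ S}, y (j : Fin n) = x j := by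
    intro j; simp [hydef, j.2]
  have hyne : y ≠ 0 := by
    intro h0
    apply hx
    funext j
    have := congrFun h0 (j : Fin n)
    rwa [hyx] at this
  have inner : ∀ a : Fin n, (∑ b, A a b * y b) = ∑ b : {z // z ∈ S}, A a b * x b := by
    intro a
    rw [← Finset.sum_subset (Finset.subset_univ S) (by
      intro b _ hb
      simp [hydef, hb])]
    rw [← Finset.sum_coe_sort S (fun b => A a b * y b)]
    exact Finset.sum_congr rfl fun b _ => by rw [hyx]
  have key : dotProduct (star x) ((principalSub A S) *ᵥ x)
      = dotProduct (star y) (A *ᵥ y) := by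
    simp only [dotProduct, Matrix.mulVec, Pi.star_apply]
    rw [← Finset.sum_subset (Finset.subset_univ S) (by
      intro a _ ha
      simp [hydef, ha])]
    rw [← Finset.sum_coe_sort S
      (fun a => star (y a) * Finset.univ.sum fun b => A a b * y b)]
    refine Finset.sum_congr rfl fun j _ => ?_
    rw [hyx, inner]
    rfl
  rw [key]
  exact hA.dotProduct_mulVec_pos hyne

theorem stmt5 (n : ℕ) (A B : Matrix (Fin n) (Fin n) ℂ)
    (hA : A.PosDef) (hB : B.IsHermitian) :
    (etaPoly A (-B)).rootMultiplicity 0 =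
      Module.finrank ℂ (LinearMap.ker B.mulVecLin) := by
  classical
  set U : Matrix (Fin n) (Fin n) ℂ := (hB.eigenvectorUnitary : Matrix (Fin n) (Fin n) ℂ)
    with hUdef
  set d : Fin n → ℝ := hB.eigenvalues with hddef
  set R : Finset (Fin n) := Finset.univ.filter (fun i => d i ≠ 0) with hRdef
  set ρ : ℕ := R.card with hρdef
  have hρn : ρ ≤ n := by
    simpa using (Finset.card_le_univ R)
  set r : ℕ := n - ρ with hrdef
  -- unitarity
  have hUU : ∀ i i' : Fin n, (∑ j, star (U j i) * U j i') = if i = i' then 1 else 0 := by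
    intro i i'
    have h1 : star U * U = 1 := Unitary.coe_star_mul_self hB.eigenvectorUnitary
    have := congrFun (congrFun h1 i) i'
    rw [Matrix.mul_apply] at this
    simpa [Matrix.one_apply, Matrix.star_apply] using this
  -- spectral decomposition, entrywise, restricted to nonzero eigenvalues
  have hBentry : ∀ j k : Fin n,
      B j k = ∑ i : {z // z ∈ R}, U j i * (d i : ℂ) * star (U k i) := by
    intro j k
    have h1 : B j k = ∑ i : Fin n, U j i * (d i : ℂ) * star (U k i) := by
      conv_lhs => rw [hB.spectral_theorem, Unitary.conjStarAlgAut_apply]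
      rw [Matrix.mul_apply]
      refine Finset.sum_congr rfl fun i _ => ?_
      rw [Matrix.mul_diagonal, Matrix.star_apply]
      norm_num [hUdef, hddef, Function.comp]
    have h2 : (∑ i : Fin n, U j i * (d i : ℂ) * star (U k i))
        = ∑ i ∈ R, U j i * (d i : ℂ) * star (U k i) := by
      refine (Finset.sum_subset (Finset.subset_univ R) ?_).symm
      intro i _ hi
      rw [hRdef] at hi
      simp only [Finset.mem_filter, Finset.mem_univ, true_and, not_not] at hi
      simp [hi]
    rw [h1, h2, ← Finset.sum_coe_sort R (fun i => U j i * (d i : ℂ) * star (U k i))]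
  -- rectangular factorization of principal submatrices
  have hPQ : ∀ T : Finset (Fin n), principalSub B T =
      (Matrix.of fun (j : {z // z ∈ T}) (i : {z // z ∈ R}) => U j i * (d i : ℂ)) *
      (Matrix.of fun (i : {z // z ∈ R}) (k : {z // z ∈ T}) => star (U k i)) := by
    intro T
    ext j k
    rw [Matrix.mul_apply]
    simpa [principalSub] using hBentry j k
  -- square factorization of principal submatrices of the right size
  have hsq : ∀ (T : Finset (Fin n)) (e : {z // z ∈ T} ≃ {z // z ∈ R}),
      (principalSub B T).det =
      (∏ i ∈ R, (d i : ℂ)) *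
        ((Matrix.of fun (i i' : {z // z ∈ R}) => U (e.symm i) i').det *
         star (Matrix.of fun (i i' : {z // z ∈ R}) => U (e.symm i) i').det) := by
    intro T e
    set N : Matrix {z // z ∈ R} {z // z ∈ R} ℂ :=
      Matrix.of fun (i i' : {z // z ∈ R}) => U (e.symm i) i' with hNdef
    set D : Matrix {z // z ∈ R} {z // z ∈ R} ℂ :=
      Matrix.diagonal (fun i : {z // z ∈ R} => (d i : ℂ)) with hDdef
    have hfac : principalSub B T = (N * D * Nᴴ).submatrix e e := by
      ext j k
      rw [Matrix.submatrix_apply]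
      rw [Matrix.mul_apply]
      have : ∀ i : {z // z ∈ R}, (N * D) (e j) i * Nᴴ i (e k)
          = U j i * (d i : ℂ) * star (U k i) := by
        intro i
        simp [hNdef, hDdef, Matrix.mul_diagonal, Matrix.conjTranspose_apply]
      rw [Finset.sum_congr rfl fun i _ => this i]
      simpa [principalSub] using hBentry j k
    rw [hfac, Matrix.det_submatrix_equiv_self, Matrix.det_mul, Matrix.det_mul,
      Matrix.det_conjTranspose, hDdef, Matrix.det_diagonal]
    rw [Finset.prod_coe_sort R (fun i => (d i : ℂ))]
    ring
  -- coefficients of etaPoly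
  have hcoeff : ∀ k, (etaPoly A (-B)).coeff k =
      ∑ S ∈ Finset.univ.filter (fun S : Finset (Fin n) => S.card = k),
        (principalSub A S).det * (principalSub (-B) Sᶜ).det := by
    intro k
    rw [etaPoly, Polynomial.finset_sum_coeff, Finset.sum_filter]
    refine Finset.sum_congr rfl fun S _ => ?_
    rw [Polynomial.coeff_C_mul, Polynomial.coeff_X_pow]
    by_cases h : S.card = k
    · simp [h]
    · simp [h, Ne.symm h]
  have hnegdet : ∀ T : Finset (Fin n),
      (principalSub (-B) T).det = (-1 : ℂ) ^ T.card * (principalSub B T).det := by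
    intro T
    have : principalSub (-B) T = -(principalSub B T) := by
      ext j k; simp [principalSub]
    rw [this, Matrix.det_neg, Fintype.card_coe]
  -- vanishing of low coefficients
  have hvanish : ∀ k, k < r → (etaPoly A (-B)).coeff k = 0 := by
    intro k hk
    rw [hcoeff]
    refine Finset.sum_eq_zero fun S hS => ?_
    rw [Finset.mem_filter] at hS
    have hcard : ρ < Sᶜ.card := by
      rw [Finset.card_compl, hS.2, Fintype.card_fin]
      omega
    have : (principalSub B Sᶜ).det = 0 := by
      rw [hPQ Sᶜ]
      refine det_mul_of_lt ?_ _ _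
      rw [Fintype.card_coe, Fintype.card_coe]
      exact hcard
    rw [hnegdet, this, mul_zero, mul_zero]
  -- rows of U restricted to columns in R span everything
  set w : Fin n → ({z // z ∈ R} → ℂ) := fun j i => U j i with hwdef
  have hspan : Submodule.span ℂ (Set.range w) = ⊤ := by
    rw [eq_top_iff]
    intro v _
    have hv : v = ∑ j : Fin n, (∑ i' : {z // z ∈ R}, v i' * star (U j i')) • w j := by
      funext i
      rw [Finset.sum_apply]
      simp only [Pi.smul_apply, smul_eq_mul, hwdef]
      calc v i = ∑ i' : {z // z ∈ R}, v i' * (if (i' : Fin n) = (i : Fin n) then 1 else 0) := by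
            symm
            simp only [mul_ite, mul_one, mul_zero, Subtype.coe_inj,
              Finset.sum_ite_eq' Finset.univ i v, Finset.mem_univ, if_true]
        _ = ∑ i' : {z // z ∈ R}, v i' * ∑ j, star (U j i') * U j i := by
            refine Finset.sum_congr rfl fun i' _ => ?_
            rw [hUU]
        _ = ∑ i' : {z // z ∈ R}, ∑ j, v i' * (star (U j i') * U j i) := by
            refine Finset.sum_congr rfl fun i' _ => ?_
            rw [Finset.mul_sum]
        _ = ∑ j, ∑ i' : {z // z ∈ R}, v i' * (star (U j i') * U j i) := Finset.sum_comm
        _ = ∑ j, (∑ i' : {z // z ∈ R}, v i' * star (U j i')) * U j i := by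
            refine Finset.sum_congr rfl fun j _ => ?_
            rw [Finset.sum_mul]
            exact Finset.sum_congr rfl fun i' _ => by ring
    rw [hv]
    exact Submodule.sum_mem _ fun j _ =>
      Submodule.smul_mem _ _ (Submodule.subset_span ⟨j, rfl⟩)
  obtain ⟨t, hts, hsp, hli⟩ := exists_linearIndependent ℂ (Set.range w)
  have htfin : t.Finite := Set.Finite.subset (Set.finite_range w) hts
  haveI := htfin.fintype
  have hcardt : Fintype.card t = ρ := by
    have hb : Module.Basis t ℂ ({z // z ∈ R} → ℂ) :=
      Module.Basis.mk hli (by rw [Subtype.range_coe, hsp, hspan])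
    rw [← Module.finrank_eq_card_basis hb, Module.finrank_fintype_fun_eq_card, Fintype.card_coe]
  have hpick : ∀ v : t, ∃ j : Fin n, w j = (v : {z // z ∈ R} → ℂ) := fun v => hts v.2
  choose jf hjf using hpick
  have hjf_inj : Function.Injective jf := by
    intro v v' h
    apply Subtype.ext
    rw [← hjf v, ← hjf v', h]
  set T0 : Finset (Fin n) := Finset.image jf Finset.univ with hT0def
  have hT0card : T0.card = ρ := by
    rw [hT0def, Finset.card_image_of_injective _ hjf_inj, Finset.card_univ, hcardt]
  have hT0li : LinearIndependent ℂ (fun x : {z // z ∈ T0} => w x) := by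
    have hmem : ∀ x : {z // z ∈ T0}, w (x : Fin n) ∈ t := by
      intro x
      obtain ⟨v, -, hv⟩ := Finset.mem_image.mp x.2
      rw [← hv, hjf v]; exact v.2
    set g : {z // z ∈ T0} → t := fun x => ⟨w x, hmem x⟩ with hgdef
    have hxg : ∀ x : {z // z ∈ T0}, jf (g x) = (x : Fin n) := by
      intro x
      obtain ⟨v, -, hv⟩ := Finset.mem_image.mp x.2
      have hgv : g x = v := by
        apply Subtype.ext
        show w x = (v : {z // z ∈ R} → ℂ)
        rw [← hv, hjf v]
      rw [hgv, hv]
    have hginj : Function.Injective g := by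
      intro x x' h
      apply Subtype.ext
      rw [← hxg x, ← hxg x', h]
    exact hli.comp g hginj
  -- the nonzero-eigenvalue product
  set P : ℂ := ∏ i ∈ R, (d i : ℂ) with hPdef
  have hPne : P ≠ 0 := by
    rw [hPdef]
    refine Finset.prod_ne_zero_iff.mpr (fun i hi => ?_)
    rw [hRdef] at hi
    simp only [Finset.mem_filter, Finset.mem_univ, true_and] at hi
    exact_mod_cast hi
  -- the square minors of the eigenvector matrix
  set q : Finset (Fin n) → ℂ := fun S =>
    if h : Fintype.card {z // z ∈ Sᶜ} = Fintype.card {z // z ∈ R} then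
      (Matrix.of fun (i i' : {z // z ∈ R}) =>
        U ((Fintype.equivOfCardEq h).symm i) i').det
    else 0 with hqdef
  have hdetS : ∀ S : Finset (Fin n), S.card = r →
      (principalSub (-B) Sᶜ).det = (-1 : ℂ) ^ ρ * (P * (q S * star (q S))) := by
    intro S hS
    have hcard : Sᶜ.card = ρ := by
      rw [Finset.card_compl, hS, Fintype.card_fin]
      omega
    have hce : Fintype.card {z // z ∈ Sᶜ} = Fintype.card {z // z ∈ R} := by
      rw [Fintype.card_coe, Fintype.card_coe, hcard]
    rw [hnegdet, hcard]
    simp only [hqdef]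
    rw [dif_pos hce, hsq Sᶜ (Fintype.equivOfCardEq hce), hPdef]
  -- a subset where the minor is nonzero
  set S₀ : Finset (Fin n) := T0ᶜ with hS₀def
  have hS₀card : S₀.card = r := by
    rw [hS₀def, Finset.card_compl, hT0card, Fintype.card_fin]
  have hS₀c : S₀ᶜ = T0 := by rw [hS₀def, compl_compl]
  have hqS₀ : q S₀ ≠ 0 := by
    have hce : Fintype.card {z // z ∈ S₀ᶜ} = Fintype.card {z // z ∈ R} := by
      rw [Fintype.card_coe, Fintype.card_coe, hS₀c, hT0card]
    simp only [hqdef]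
    rw [dif_pos hce]
    have hli2 : LinearIndependent ℂ (fun x : {z // z ∈ S₀ᶜ} => w x) := by
      rw [hS₀c]
      exact hT0li
    have hrows : LinearIndependent ℂ (fun i : {z // z ∈ R} =>
        (Matrix.of fun (i i' : {z // z ∈ R}) =>
          U ((Fintype.equivOfCardEq hce).symm i) i') i) :=
      hli2.comp (Fintype.equivOfCardEq hce).symm (Fintype.equivOfCardEq hce).symm.injective
    have hu : IsUnit (Matrix.of fun (i i' : {z // z ∈ R}) =>
        U ((Fintype.equivOfCardEq hce).symm i) i') :=
      Matrix.linearIndependent_rows_iff_isUnit.mp hrows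
    exact ((Matrix.isUnit_iff_isUnit_det _).mp hu).ne_zero
  -- the coefficient at r
  have hcoeffr : (etaPoly A (-B)).coeff r =
      (-1 : ℂ) ^ ρ * P * ∑ S ∈ Finset.univ.filter (fun S : Finset (Fin n) => S.card = r),
        (principalSub A S).det * (q S * star (q S)) := by
    rw [hcoeff, Finset.mul_sum]
    refine Finset.sum_congr rfl fun S hS => ?_
    rw [Finset.mem_filter] at hS
    rw [hdetS S hS.2]
    ring
  have hsumpos : 0 < ∑ S ∈ Finset.univ.filter (fun S : Finset (Fin n) => S.card = r),
      (principalSub A S).det * (q S * star (q S)) := by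
    refine Finset.sum_pos' (fun S _ => ?_) ⟨S₀, ?_, ?_⟩
    · exact mul_nonneg (le_of_lt (principalSub_posDef hA S).det_pos) (mul_star_self_nonneg _)
    · rw [Finset.mem_filter]
      exact ⟨Finset.mem_univ _, hS₀card⟩
    · refine mul_pos (principalSub_posDef hA S₀).det_pos ?_
      have h0 : q S₀ * star (q S₀) ≠ 0 := mul_ne_zero hqS₀ (star_ne_zero.mpr hqS₀)
      exact lt_of_le_of_ne (mul_star_self_nonneg _) (Ne.symm h0)
  have hcoeffr_ne : (etaPoly A (-B)).coeff r ≠ 0 := by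
    rw [hcoeffr]
    exact mul_ne_zero (mul_ne_zero (pow_ne_zero _ (by norm_num)) hPne) (ne_of_gt hsumpos)
  -- the kernel dimension
  have hrank : B.rank = ρ := by
    rw [hB.rank_eq_card_non_zero_eigs, Fintype.card_subtype]
  have h2 : Module.finrank ℂ (LinearMap.range B.mulVecLin) = ρ := hrank
  have hker : Module.finrank ℂ (LinearMap.ker B.mulVecLin) = r := by
    have h1 := LinearMap.finrank_range_add_finrank_ker B.mulVecLin
    rw [Module.finrank_fintype_fun_eq_card, Fintype.card_fin, h2] at h1
    omega
  rw [Polynomial.rootMultiplicity_eq_natTrailingDegree', hker]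
  have hne : etaPoly A (-B) ≠ 0 := fun h => hcoeffr_ne (by rw [h]; simp)
  exact le_antisymm (Polynomial.natTrailingDegree_le_of_ne_zero hcoeffr_ne)
    (Polynomial.le_natTrailingDegree hne hvanish)
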